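/- (i) For any bounded open sets Ω₁, Ω₂ ⊆ ℝⁿ each containing the origin, there exists a constant C ≥ 1 such that C⁻¹ · ∫_{Ω₂} Λ(x,r)⁻¹ dx ≤ ∫_{Ω₁} Λ(x,r)⁻¹ dx ≤ C · ∫_{Ω₂} Λ(x,r)⁻¹ dx for all r > 0 (as integrals with values in [0,∞]). (ii) If moreover there is a set 𝒜 = {i₁ < … < i_v} ⊆ {1,…,n} with 1 ≤ v ≤ n such that every f_k(x) depends only on the coordinates (x_{i₁},…,x_{i_v}), then for every bounded open Ω ⊆ ℝⁿ containing the origin and every bounded open Ω′ ⊆ ℝ^v containing the origin there exists C ≥ 1 such that C⁻¹ · ∫_{Ω′} Λ(ι(z),r)⁻¹ dz ≤ ∫_{Ω} Λ(x,r)⁻¹ dx ≤ C · ∫_{Ω′} Λ(ι(z),r)⁻¹ dz for all r > 0, where ι(z) ∈ ℝⁿ is the point whose i_m-th coordinate is z_m for m = 1,…,v and whose other coordinates are 0. -/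

import Mathlib

open MeasureTheory Set
open scoped ENNReal

/-- The Nagel–Stein–Wainger type polynomial `Λ(x,r) = Σ_{k=w}^{Q} f_k(x) r^k`. -/
noncomputable def LamNSW (n w : ℕ) (α : Fin n → ℕ) (f : ℕ → (Fin n → ℝ) → ℝ)
    (x : Fin n → ℝ) (r : ℝ) : ℝ :=
  ∑ k ∈ Finset.Icc w (∑ i, α i), f k x * r ^ k

/-- The integral `∫_Ω Λ(x,r)⁻¹ dx` with values in `[0,∞]`. -/
noncomputable def JNSW (n w : ℕ) (α : Fin n → ℕ) (f : ℕ → (Fin n → ℝ) → ℝ)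
    (Ω : Set (Fin n → ℝ)) (r : ℝ) : ℝ≥0∞ :=
  ∫⁻ x in Ω, ENNReal.ofReal (LamNSW n w α f x r)⁻¹



lemma nsw_half {K C : ℝ} (hK : 0 < K) (hKC : K ≤ C) {A B : ℝ≥0∞}
    (h : A ≤ ENNReal.ofReal K * B) : ENNReal.ofReal C⁻¹ * A ≤ B := by
  have hC : 0 < C := hK.trans_le hKC
  calc ENNReal.ofReal C⁻¹ * A ≤ ENNReal.ofReal C⁻¹ * (ENNReal.ofReal K * B) :=
        mul_le_mul_right h _
    _ = ENNReal.ofReal (C⁻¹ * K) * B := by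
        rw [ENNReal.ofReal_mul (by positivity), mul_assoc]
    _ ≤ 1 * B := by
        gcongr
        refine ENNReal.ofReal_le_one.mpr ?_
        rw [← div_eq_inv_mul]
        exact (div_le_one hC).mpr hKC
    _ = B := one_mul B

/-- anisotropic box -/
def nswBox {d : ℕ} (β : Fin d → ℕ) (s : ℝ) : Set (Fin d → ℝ) :=
  Set.pi Set.univ fun i => Set.Ioo (-(s ^ β i)) (s ^ β i)

lemma nswBox_measurable {d : ℕ} (β : Fin d → ℕ) (s : ℝ) : MeasurableSet (nswBox β s) :=
  MeasurableSet.univ_pi fun _ => measurableSet_Ioo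

lemma nswBox_mono {d : ℕ} (β : Fin d → ℕ) {a b : ℝ} (h0 : 0 ≤ a) (hab : a ≤ b) :
    nswBox β a ⊆ nswBox β b := by
  intro x hx i hi
  have h1 : a ^ β i ≤ b ^ β i := pow_le_pow_left₀ h0 hab _
  have := hx i hi
  exact ⟨lt_of_le_of_lt (neg_le_neg h1) this.1, this.2.trans_le h1⟩

lemma exists_nswBox_subset {d : ℕ} (β : Fin d → ℕ) (hβ : ∀ i, 0 < β i)
    {Ω : Set (Fin d → ℝ)} (hΩ : IsOpen Ω) (h0 : (0 : Fin d → ℝ) ∈ Ω) :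
    ∃ a : ℝ, 0 < a ∧ a ≤ 1 ∧ nswBox β a ⊆ Ω := by
  obtain ⟨ε, hε, hball⟩ := Metric.isOpen_iff.mp hΩ 0 h0
  refine ⟨min (ε/2) 1, by positivity, min_le_right _ _, fun x hx => hball ?_⟩
  rw [Metric.mem_ball, dist_pi_lt_iff hε]
  intro i
  have hxi := hx i (mem_univ i)
  have h1 : (min (ε/2) 1 : ℝ) ^ β i ≤ min (ε/2) 1 :=
    pow_le_of_le_one (by positivity) (min_le_right _ _) (hβ i).ne'
  have h2 : |x i| < min (ε/2) 1 := lt_of_lt_of_le (abs_lt.mpr hxi) h1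
  have : |x i| < ε := lt_of_lt_of_le h2 ((min_le_left _ _).trans (by linarith))
  simpa [Real.dist_eq] using this

lemma exists_subset_nswBox {d : ℕ} (β : Fin d → ℕ) (hβ : ∀ i, 0 < β i)
    {Ω : Set (Fin d → ℝ)} (hΩ : Bornology.IsBounded Ω) :
    ∃ b : ℝ, 1 ≤ b ∧ Ω ⊆ nswBox β b := by
  obtain ⟨R, hR⟩ := hΩ.subset_closedBall 0
  refine ⟨max (R+1) 1, le_max_right _ _, fun x hx => ?_⟩
  intro i _
  have h1 : dist (x i) 0 ≤ dist x 0 := dist_le_pi_dist x 0 i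
  have h2 : dist x 0 ≤ R := by simpa [Metric.mem_closedBall] using hR hx
  have hb1 : (1:ℝ) ≤ max (R+1) 1 := le_max_right _ _
  have hb : max (R+1) 1 ≤ (max (R+1) 1) ^ β i := le_self_pow₀ hb1 (hβ i).ne'
  have : |x i| < max (R+1) 1 := by
    have : |x i| ≤ R := by simpa [Real.dist_eq] using h1.trans h2
    have : |x i| < R + 1 := by linarith
    exact lt_of_lt_of_le this (le_max_left _ _)
  have := lt_of_lt_of_le this hb
  exact abs_lt.mp this


lemma nsw_scale {d : ℕ} (c : Fin d → ℝ) (hc : ∀ m, 0 < c m) (g : (Fin d → ℝ) → ℝ≥0∞)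
    (hg : Measurable g) (A : Set (Fin d → ℝ)) (hA : MeasurableSet A) :
    ∫⁻ z in A, g z = ENNReal.ofReal (∏ m, c m) *
      ∫⁻ y in (fun y : Fin d → ℝ => fun m => c m * y m) ⁻¹' A, g (fun m => c m * y m) := by
  classical
  set L : (Fin d → ℝ) →ₗ[ℝ] (Fin d → ℝ) := Matrix.toLin' (Matrix.diagonal c) with hL
  have hprod : (0:ℝ) < ∏ m, c m := Finset.prod_pos fun m _ => hc m
  have hLapp : ⇑L = fun y : Fin d → ℝ => fun m => c m * y m := by
    funext y m
    simp [hL, Matrix.toLin'_apply, Matrix.mulVec_diagonal]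
  have hdet : LinearMap.det L = ∏ m, c m := by
    rw [hL, LinearMap.det_toLin', Matrix.det_diagonal]
  have hdet0 : LinearMap.det L ≠ 0 := by rw [hdet]; exact hprod.ne'
  have hmap := Real.map_linearMap_volume_pi_eq_smul_volume_pi hdet0
  have hvol : (volume : Measure (Fin d → ℝ)) =
      ENNReal.ofReal (∏ m, c m) • Measure.map L volume := by
    rw [hmap, hdet, smul_smul, abs_of_pos (by positivity), ← ENNReal.ofReal_mul hprod.le,
      mul_inv_cancel₀ hprod.ne', ENNReal.ofReal_one, one_smul]
  have hLmeas : Measurable L := L.continuous_of_finiteDimensional.measurable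
  calc ∫⁻ z in A, g z ∂volume
      = ∫⁻ z in A, g z ∂(ENNReal.ofReal (∏ m, c m) • Measure.map L volume) := by rw [← hvol]
    _ = ENNReal.ofReal (∏ m, c m) * ∫⁻ z in A, g z ∂(Measure.map L volume) := by
        rw [Measure.restrict_smul, lintegral_smul_measure, smul_eq_mul]
    _ = ENNReal.ofReal (∏ m, c m) * ∫⁻ z, g z ∂(Measure.map L (volume.restrict (L ⁻¹' A))) := by
        rw [Measure.restrict_map hLmeas hA]
    _ = ENNReal.ofReal (∏ m, c m) * ∫⁻ y in L ⁻¹' A, g (L y) := by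
        rw [lintegral_map hg hLmeas]
    _ = _ := by rw [hLapp]

lemma nsw_fubini {n v : ℕ} (α : Fin n → ℕ) (e : Fin v → Fin n) (he : Function.Injective e) :
    ∃ D : ℝ → ℝ, (∀ s, 0 < s → 0 < D s) ∧
      ∀ (Φ : (Fin v → ℝ) → ℝ≥0∞), Measurable Φ → ∀ (F : (Fin n → ℝ) → ℝ≥0∞),
      (∀ x, F x = Φ (fun m => x (e m))) → ∀ s : ℝ, 0 < s →
      ∫⁻ x in nswBox α s, F x =
        ENNReal.ofReal (D s) * ∫⁻ z in nswBox (fun m => α (e m)) s, Φ z := by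
  classical
  set p : Fin n → Prop := fun i => ∃ m, e m = i with hp
  refine ⟨fun s => ∏ j : {i // ¬ p i}, (2 * s ^ α j.1), fun s hs => Finset.prod_pos
    (fun j _ => by positivity), ?_⟩
  intro Φ hΦ F hFΦ s hs
  have hF : Measurable F := by
    have : F = fun x => Φ (fun m => x (e m)) := funext hFΦ
    rw [this]
    exact hΦ.comp (measurable_pi_lambda _ fun m => measurable_pi_apply _)
  set e' : Fin v ≃ {i // p i} :=
    Equiv.ofBijective (fun m => ⟨e m, m, rfl⟩)
      ⟨fun a b hab => he (congrArg Subtype.val hab),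
       fun j => by obtain ⟨m, hm⟩ := j.2; exact ⟨m, Subtype.ext hm⟩⟩ with he'
  have he'val : ∀ m, (e' m).1 = e m := fun m => rfl
  set σ := MeasurableEquiv.piEquivPiSubtypeProd (fun _ : Fin n => ℝ) p with hσdef
  set BoxP : Set ({i // p i} → ℝ) := Set.pi univ fun j => Ioo (-(s ^ α j.1)) (s ^ α j.1) with hBoxP
  set BoxPc : Set ({i // ¬ p i} → ℝ) := Set.pi univ fun j => Ioo (-(s ^ α j.1)) (s ^ α j.1)
    with hBoxPc
  set H : ({i // p i} → ℝ) → ℝ≥0∞ := fun y => Φ (fun m => y (e' m)) with hH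
  have hHm : Measurable H := hΦ.comp (measurable_pi_lambda _ fun m => measurable_pi_apply _)
  have hsymm : ∀ (y : {i // p i} → ℝ) (u : {i // ¬ p i} → ℝ) (i : Fin n),
      σ.symm (y, u) i = if h : p i then y ⟨i, h⟩ else u ⟨i, h⟩ := fun y u i => rfl
  -- membership characterization
  have hmem : ∀ q : ({i // p i} → ℝ) × ({i // ¬ p i} → ℝ),
      σ.symm q ∈ nswBox α s ↔ q ∈ BoxP ×ˢ BoxPc := by
    rintro ⟨y, u⟩
    constructor
    · intro hq
      constructor
      · intro j _
        have := hq j.1 (mem_univ _)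
        rwa [hsymm, dif_pos j.2, Subtype.coe_eta] at this
      · intro j _
        have := hq j.1 (mem_univ _)
        rwa [hsymm, dif_neg j.2, Subtype.coe_eta] at this
    · rintro ⟨h1, h2⟩ i _
      rw [hsymm]
      by_cases h : p i
      · rw [dif_pos h]; exact h1 ⟨i, h⟩ (mem_univ _)
      · rw [dif_neg h]; exact h2 ⟨i, h⟩ (mem_univ _)
  -- value characterization
  have hval : ∀ (y : {i // p i} → ℝ) (u : {i // ¬ p i} → ℝ),
      F (σ.symm (y, u)) = H y := by
    intro y u
    rw [hFΦ]
    congr 1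
    funext m
    rw [hsymm, dif_pos (⟨m, rfl⟩ : p (e m))]
    exact congrArg y (Subtype.ext rfl)
  have hind : ∀ q : ({i // p i} → ℝ) × ({i // ¬ p i} → ℝ),
      (nswBox α s).indicator F (σ.symm q) = (BoxP ×ˢ BoxPc).indicator (fun q => H q.1) q := by
    rintro ⟨y, u⟩
    by_cases hq : (y, u) ∈ BoxP ×ˢ BoxPc
    · rw [Set.indicator_of_mem ((hmem _).mpr hq), Set.indicator_of_mem hq, hval]
    · rw [Set.indicator_of_notMem (fun h => hq ((hmem _).mp h)), Set.indicator_of_notMem hq]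
  have mpσ := MeasurePreserving.symm σ
    (volume_preserving_piEquivPiSubtypeProd (fun _ : Fin n => ℝ) p)
  -- κ step : ∫⁻ y in BoxP, H y = ∫⁻ z in BoxV s, Φ z
  set κ := MeasurableEquiv.piCongrLeft (fun _ : {i // p i} => ℝ) e' with hκdef
  have mpκ := volume_measurePreserving_piCongrLeft (fun _ : {i // p i} => ℝ) e'
  have hκapp : ∀ (z : Fin v → ℝ) (m : Fin v), κ z (e' m) = z m := by
    intro z m
    exact MeasurableEquiv.piCongrLeft_apply_apply e' (β := fun _ => ℝ) z m
  have hκmem : ∀ z : Fin v → ℝ, κ z ∈ BoxP ↔ z ∈ nswBox (fun m => α (e m)) s := by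
    intro z
    constructor
    · intro hz m _
      have h2 := hz (e' m) (mem_univ _)
      rw [hκapp] at h2
      simpa [he'val m] using h2
    · intro hz j _
      obtain ⟨m, rfl⟩ := e'.surjective j
      rw [hκapp]
      simpa [he'val m] using hz m (mem_univ _)
  have hκval : ∀ z : Fin v → ℝ, H (κ z) = Φ z := by
    intro z
    show Φ (fun m => κ z (e' m)) = Φ z
    congr 1
    funext m
    exact hκapp z m
  have hstep2 : ∫⁻ y in BoxP, H y = ∫⁻ z in nswBox (fun m => α (e m)) s, Φ z := by
    have hBoxPm : MeasurableSet BoxP := MeasurableSet.univ_pi fun _ => measurableSet_Ioo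
    rw [← lintegral_indicator hBoxPm, ← lintegral_indicator (nswBox_measurable _ _),
      ← mpκ.lintegral_comp (hHm.indicator hBoxPm)]
    congr 1
    funext z
    by_cases hz : z ∈ nswBox (fun m => α (e m)) s
    · rw [Set.indicator_of_mem ((hκmem z).mpr hz), Set.indicator_of_mem hz, hκval]
    · rw [Set.indicator_of_notMem (fun h => hz ((hκmem z).mp h)), Set.indicator_of_notMem hz]
  -- volume of complementary box
  have hvolc : (volume BoxPc) = ENNReal.ofReal (∏ j : {i // ¬ p i}, (2 * s ^ α j.1)) := by
    rw [hBoxPc, volume_pi_pi, ENNReal.ofReal_prod_of_nonneg (fun j _ => by positivity)]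
    congr 1
    funext j
    rw [Real.volume_Ioo]
    congr 1
    ring
  -- main chain
  calc ∫⁻ x in nswBox α s, F x
      = ∫⁻ x, (nswBox α s).indicator F x := (lintegral_indicator (nswBox_measurable _ _) F).symm
    _ = ∫⁻ q, (nswBox α s).indicator F (σ.symm q) := (mpσ.lintegral_comp
        (hF.indicator (nswBox_measurable _ _))).symm
    _ = ∫⁻ q, (BoxP ×ˢ BoxPc).indicator (fun q => H q.1) q := by
        congr 1; funext q; exact hind q
    _ = ∫⁻ q in BoxP ×ˢ BoxPc, H q.1 ∂(volume : Measure (_ × _)) := by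
        rw [lintegral_indicator]
        exact (MeasurableSet.univ_pi fun _ => measurableSet_Ioo).prod
          (MeasurableSet.univ_pi fun _ => measurableSet_Ioo)
    _ = ∫⁻ q, H q.1 ∂((volume.restrict BoxP).prod (volume.restrict BoxPc)) := by
        rw [Measure.volume_eq_prod, Measure.prod_restrict]
    _ = ∫⁻ q, H q.1 * (fun _ : {i // ¬ p i} → ℝ => (1:ℝ≥0∞)) q.2
          ∂((volume.restrict BoxP).prod (volume.restrict BoxPc)) := by
        congr 1; funext q; simp
    _ = (∫⁻ y in BoxP, H y) * ∫⁻ u in BoxPc, (1:ℝ≥0∞) :=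
        lintegral_prod_mul hHm.aemeasurable aemeasurable_const
    _ = (∫⁻ y in BoxP, H y) * volume BoxPc := by
        rw [setLIntegral_one]
    _ = ENNReal.ofReal (∏ j : {i // ¬ p i}, (2 * s ^ α j.1)) *
          ∫⁻ z in nswBox (fun m => α (e m)) s, Φ z := by
        rw [hstep2, hvolc, mul_comm]

lemma nsw_main {n : ℕ} (α : Fin n → ℕ) (hα : ∀ i, 0 < α i)
    (w : ℕ) (hwQ : w ≤ ∑ i, α i)
    (f : ℕ → (Fin n → ℝ) → ℝ)
    (hf_cont : ∀ k ∈ Finset.Icc w (∑ i, α i), Continuous (f k))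
    (hf_nonneg : ∀ k ∈ Finset.Icc w (∑ i, α i), ∀ x, 0 ≤ f k x)
    (hf_hom : ∀ k ∈ Finset.Icc w (∑ i, α i), ∀ t : ℝ, 0 < t → ∀ x : Fin n → ℝ,
      f k (fun i => t ^ α i * x i) = t ^ ((∑ i, α i) - k) * f k x)
    (hfQ : ∃ cQ : ℝ, 0 < cQ ∧ ∀ x, f (∑ i, α i) x = cQ)
    {v : ℕ} (e : Fin v → Fin n) (he : Function.Injective e)
    (hdep : ∀ k ∈ Finset.Icc w (∑ i, α i), ∀ x y : Fin n → ℝ,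
      (∀ m, x (e m) = y (e m)) → f k x = f k y)
    (Ω : Set (Fin n → ℝ)) (hΩo : IsOpen Ω) (hΩb : Bornology.IsBounded Ω)
    (hΩ0 : (0 : Fin n → ℝ) ∈ Ω)
    (Ω' : Set (Fin v → ℝ)) (hΩ'o : IsOpen Ω') (hΩ'b : Bornology.IsBounded Ω')
    (hΩ'0 : (0 : Fin v → ℝ) ∈ Ω') :
    ∃ C : ℝ, 1 ≤ C ∧ ∀ r : ℝ, 0 < r →
      ENNReal.ofReal C⁻¹ *
          (∫⁻ z in Ω', ENNReal.ofReal
            (LamNSW n w α f (fun i => ∑ m, if e m = i then z m else 0) r)⁻¹) ≤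
        JNSW n w α f Ω r ∧
      JNSW n w α f Ω r ≤ ENNReal.ofReal C *
          (∫⁻ z in Ω', ENNReal.ofReal
            (LamNSW n w α f (fun i => ∑ m, if e m = i then z m else 0) r)⁻¹) := by
  obtain ⟨cQ, hcQ, hfQc⟩ := hfQ
  set Q : ℕ := ∑ i, α i with hQdef
  have hQmem : Q ∈ Finset.Icc w Q := Finset.mem_Icc.mpr ⟨hwQ, le_rfl⟩
  set ι : (Fin v → ℝ) → (Fin n → ℝ) := fun z => fun i => ∑ m, if e m = i then z m else 0
    with hιdef
  set Φ : ℝ → (Fin v → ℝ) → ℝ≥0∞ :=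
    fun r z => ENNReal.ofReal (LamNSW n w α f (ι z) r)⁻¹ with hΦdef
  set G : ℝ → (Fin n → ℝ) → ℝ≥0∞ :=
    fun r x => ENNReal.ofReal (LamNSW n w α f x r)⁻¹ with hGdef
  -- positivity of Lam
  have hLam_pos : ∀ (x : Fin n → ℝ) (r : ℝ), 0 < r → 0 < LamNSW n w α f x r := by
    intro x r hr
    have h2 : f Q x * r ^ Q ≤ LamNSW n w α f x r := by
      refine Finset.single_le_sum (f := fun k => f k x * r ^ k) ?_ hQmem
      exact fun k hk => mul_nonneg (hf_nonneg k hk x) (pow_nonneg hr.le k)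
    rw [hfQc x] at h2
    have h3 : 0 < cQ * r ^ Q := by positivity
    linarith
  -- continuity / measurability
  have hLam_cont : ∀ r, Continuous fun x => LamNSW n w α f x r := by
    intro r
    exact continuous_finset_sum _ fun k hk => (hf_cont k hk).mul continuous_const
  have hι_cont : Continuous ι := by
    refine continuous_pi fun i => continuous_finset_sum _ fun m _ => ?_
    by_cases h : e m = i
    · simpa [h] using continuous_apply m
    · simpa [h] using (continuous_const : Continuous fun _ : Fin v → ℝ => (0:ℝ))
  have hΦm : ∀ r, Measurable (Φ r) := fun r =>
    ENNReal.measurable_ofReal.comp (((hLam_cont r).comp hι_cont).measurable.inv)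
  -- ι coordinates
  have hι_e : ∀ (z : Fin v → ℝ) (m : Fin v), ι z (e m) = z m := by
    intro z m
    show (∑ m', if e m' = e m then z m' else 0) = z m
    have h1 : ∀ m' : Fin v, (if e m' = e m then z m' else 0) = if m' = m then z m' else 0 := by
      intro m'; simp [he.eq_iff]
    rw [Finset.sum_congr rfl fun m' _ => h1 m']
    simp [Finset.sum_ite_eq']
  have hGΦ : ∀ r (x : Fin n → ℝ), G r x = Φ r (fun m => x (e m)) := by
    intro r x
    have hLd : LamNSW n w α f x r = LamNSW n w α f (ι fun m => x (e m)) r := by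
      refine Finset.sum_congr rfl fun k hk => ?_
      rw [hdep k hk x (ι fun m => x (e m)) fun m => (hι_e (fun m2 => x (e m2)) m).symm]
    rw [hΦdef, hGdef]
    simp only [hLd]
  -- scaling of ι
  have hι_scale : ∀ (t : ℝ) (z : Fin v → ℝ),
      ι (fun m => t ^ α (e m) * z m) = fun i => t ^ α i * ι z i := by
    intro t z; funext i
    show (∑ m, if e m = i then t ^ α (e m) * z m else 0) = t ^ α i * ∑ m, if e m = i then z m else 0
    rw [Finset.mul_sum]
    refine Finset.sum_congr rfl fun m _ => ?_
    by_cases h : e m = i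
    · rw [if_pos h, if_pos h, h]
    · rw [if_neg h, if_neg h, mul_zero]
  have hmono : ∀ (t : ℝ), 1 ≤ t → ∀ (z : Fin v → ℝ) (r : ℝ), 0 ≤ r →
      LamNSW n w α f (ι z) r ≤ LamNSW n w α f (ι (fun m => t ^ α (e m) * z m)) r := by
    intro t ht z r hr
    rw [hι_scale]
    have ht0 : (0:ℝ) < t := lt_of_lt_of_le one_pos ht
    refine Finset.sum_le_sum fun k hk => ?_
    rw [hf_hom k hk t ht0 (ι z)]
    have h1 : (1:ℝ) ≤ t ^ (Q - k) := one_le_pow₀ ht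
    exact mul_le_mul_of_nonneg_right
      (le_mul_of_one_le_left (hf_nonneg k hk (ι z)) h1) (pow_nonneg hr k)
  -- Fubini data
  obtain ⟨D, hD, hDeq⟩ := nsw_fubini α e he
  -- scaling estimate
  have hscale : ∀ (s t r : ℝ), 0 < s → 1 ≤ t → 0 < r →
      ∫⁻ z in nswBox (fun m => α (e m)) (t * s), Φ r z ≤
        ENNReal.ofReal (t ^ (∑ m, α (e m))) * ∫⁻ z in nswBox (fun m => α (e m)) s, Φ r z := by
    intro s t r hs ht hr
    have ht0 : (0:ℝ) < t := lt_of_lt_of_le one_pos ht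
    have h1 := nsw_scale (fun m => t ^ α (e m)) (fun m => pow_pos ht0 _) (Φ r) (hΦm r)
      (nswBox (fun m => α (e m)) (t * s)) (nswBox_measurable _ _)
    have hpre : (fun y : Fin v → ℝ => fun m => t ^ α (e m) * y m) ⁻¹'
        nswBox (fun m => α (e m)) (t * s) = nswBox (fun m => α (e m)) s := by
      ext y
      simp only [nswBox, Set.mem_preimage, Set.mem_pi, Set.mem_univ, true_implies,
        Set.mem_Ioo]
      refine forall_congr' fun m => ?_
      have hc : (0:ℝ) < t ^ α (e m) := pow_pos ht0 _
      rw [mul_pow]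
      constructor
      · rintro ⟨hA, hB⟩
        constructor <;> nlinarith
      · rintro ⟨hA, hB⟩
        constructor <;> nlinarith
    have hpoint : ∀ y : Fin v → ℝ, Φ r (fun m => t ^ α (e m) * y m) ≤ Φ r y := by
      intro y
      refine ENNReal.ofReal_le_ofReal ?_
      exact inv_anti₀ (hLam_pos (ι y) r hr) (hmono t ht y r hr.le)
    calc ∫⁻ z in nswBox (fun m => α (e m)) (t * s), Φ r z
        = ENNReal.ofReal (∏ m, t ^ α (e m)) *
            ∫⁻ y in nswBox (fun m => α (e m)) s, Φ r (fun m => t ^ α (e m) * y m) := by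
          rw [h1, hpre]
      _ ≤ ENNReal.ofReal (∏ m, t ^ α (e m)) *
            ∫⁻ y in nswBox (fun m => α (e m)) s, Φ r y :=
          mul_le_mul_right (lintegral_mono fun y => hpoint y) _
      _ = ENNReal.ofReal (t ^ (∑ m, α (e m))) *
            ∫⁻ z in nswBox (fun m => α (e m)) s, Φ r z := by
          rw [Finset.prod_pow_eq_pow_sum]
  -- boxes around Ω and Ω'
  obtain ⟨a1, ha1pos, ha1le, ha1sub⟩ := exists_nswBox_subset α hα hΩo hΩ0
  obtain ⟨a2, ha2pos, ha2le, ha2sub⟩ :=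
    exists_nswBox_subset (fun m => α (e m)) (fun m => hα _) hΩ'o hΩ'0
  obtain ⟨b1, hb1ge, hb1sub⟩ := exists_subset_nswBox α hα hΩb
  obtain ⟨b2, hb2ge, hb2sub⟩ := exists_subset_nswBox (fun m => α (e m)) (fun m => hα _) hΩ'b
  set a₀ : ℝ := min a1 a2 with ha₀def
  set b₀ : ℝ := max b1 b2 with hb₀def
  have ha₀pos : 0 < a₀ := lt_min ha1pos ha2pos
  have ha₀le1 : a₀ ≤ 1 := (min_le_left _ _).trans ha1le
  have hb₀ge1 : (1:ℝ) ≤ b₀ := hb1ge.trans (le_max_left _ _)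
  have ha₀b₀ : a₀ ≤ b₀ := ha₀le1.trans hb₀ge1
  set t : ℝ := b₀ / a₀ with htdef
  have ht1 : 1 ≤ t := (one_le_div ha₀pos).mpr ha₀b₀
  have hts : t * a₀ = b₀ := div_mul_cancel₀ _ ha₀pos.ne'
  set Q' : ℕ := ∑ m, α (e m) with hQ'def
  set T : ℝ := t ^ Q' with hTdef
  have hTpos : 0 < T := pow_pos (lt_of_lt_of_le one_pos ht1) _
  have hdA : 0 < D a₀ := hD a₀ ha₀pos
  have hdB : 0 < D b₀ := hD b₀ (lt_of_lt_of_le one_pos hb₀ge1)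
  set K₁ : ℝ := D b₀ * T with hK₁def
  set K₂ : ℝ := T * (D a₀)⁻¹ with hK₂def
  have hK₁pos : 0 < K₁ := by positivity
  have hK₂pos : 0 < K₂ := by positivity
  set C : ℝ := max 1 (max K₁ K₂) with hCdef
  have hC1 : (1:ℝ) ≤ C := le_max_left _ _
  have hK₁C : K₁ ≤ C := (le_max_left _ _).trans (le_max_right _ _)
  have hK₂C : K₂ ≤ C := (le_max_right _ _).trans (le_max_right _ _)
  -- the two key estimates
  have key1 : ∀ r : ℝ, 0 < r →
      (∫⁻ x in Ω, G r x) ≤ ENNReal.ofReal K₁ * ∫⁻ z in Ω', Φ r z := by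
    intro r hr
    calc ∫⁻ x in Ω, G r x
        ≤ ∫⁻ x in nswBox α b₀, G r x := lintegral_mono_set
          (hb1sub.trans (nswBox_mono α (by linarith) (le_max_left _ _)))
      _ = ENNReal.ofReal (D b₀) * ∫⁻ z in nswBox (fun m => α (e m)) b₀, Φ r z :=
          hDeq (Φ r) (hΦm r) (G r) (hGΦ r) b₀ (lt_of_lt_of_le one_pos hb₀ge1)
      _ ≤ ENNReal.ofReal (D b₀) *
            (ENNReal.ofReal T * ∫⁻ z in nswBox (fun m => α (e m)) a₀, Φ r z) := by
          refine mul_le_mul_right ?_ _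
          rw [← hts]
          exact hscale a₀ t r ha₀pos ht1 hr
      _ ≤ ENNReal.ofReal (D b₀) * (ENNReal.ofReal T * ∫⁻ z in Ω', Φ r z) := by
          refine mul_le_mul_right (mul_le_mul_right ?_ _) _
          exact lintegral_mono_set ((nswBox_mono _ ha₀pos.le (min_le_right _ _)).trans ha2sub)
      _ = ENNReal.ofReal K₁ * ∫⁻ z in Ω', Φ r z := by
          rw [hK₁def, ENNReal.ofReal_mul hdB.le, mul_assoc]
  have key2 : ∀ r : ℝ, 0 < r →
      (∫⁻ z in Ω', Φ r z) ≤ ENNReal.ofReal K₂ * ∫⁻ x in Ω, G r x := by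
    intro r hr
    have hfa : ∫⁻ x in nswBox α a₀, G r x =
        ENNReal.ofReal (D a₀) * ∫⁻ z in nswBox (fun m => α (e m)) a₀, Φ r z :=
      hDeq (Φ r) (hΦm r) (G r) (hGΦ r) a₀ ha₀pos
    have hJa : (∫⁻ z in nswBox (fun m => α (e m)) a₀, Φ r z) =
        ENNReal.ofReal (D a₀)⁻¹ * ∫⁻ x in nswBox α a₀, G r x := by
      rw [hfa, ← mul_assoc, ← ENNReal.ofReal_mul (by positivity), inv_mul_cancel₀ hdA.ne',
        ENNReal.ofReal_one, one_mul]
    calc ∫⁻ z in Ω', Φ r z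
        ≤ ∫⁻ z in nswBox (fun m => α (e m)) b₀, Φ r z := lintegral_mono_set
          (hb2sub.trans (nswBox_mono _ (by linarith) (le_max_right _ _)))
      _ ≤ ENNReal.ofReal T * ∫⁻ z in nswBox (fun m => α (e m)) a₀, Φ r z := by
          rw [← hts]
          exact hscale a₀ t r ha₀pos ht1 hr
      _ = ENNReal.ofReal T * (ENNReal.ofReal (D a₀)⁻¹ * ∫⁻ x in nswBox α a₀, G r x) := by
          rw [hJa]
      _ ≤ ENNReal.ofReal T * (ENNReal.ofReal (D a₀)⁻¹ * ∫⁻ x in Ω, G r x) := by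
          refine mul_le_mul_right (mul_le_mul_right ?_ _) _
          exact lintegral_mono_set ((nswBox_mono _ ha₀pos.le (min_le_left _ _)).trans ha1sub)
      _ = ENNReal.ofReal K₂ * ∫⁻ x in Ω, G r x := by
          rw [hK₂def, ENNReal.ofReal_mul hTpos.le, mul_assoc]
  refine ⟨C, hC1, fun r hr => ⟨?_, ?_⟩⟩
  · exact nsw_half hK₂pos hK₂C (key2 r hr)
  · calc JNSW n w α f Ω r ≤ ENNReal.ofReal K₁ * ∫⁻ z in Ω', Φ r z := key1 r hr
      _ ≤ ENNReal.ofReal C * ∫⁻ z in Ω', Φ r z :=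
          mul_le_mul_left (ENNReal.ofReal_le_ofReal hK₁C) _

/-- (i) for any two bounded open sets `Ω₁, Ω₂` containing the origin,
the integrals `∫_{Ω_i} Λ(x,r)⁻¹ dx` are comparable uniformly in `r > 0`; (ii) if moreover
every `f_k` depends only on the coordinates indexed by a set `𝒜 = {i₁ < … < i_v}`, then
`∫_Ω Λ(x,r)⁻¹ dx` is comparable, uniformly in `r > 0`, to the `v`-dimensional integral
`∫_{Ω'} Λ(ι z, r)⁻¹ dz` for any bounded open `Ω' ⊆ ℝ^v` containing the origin, where
`ι z` has `i_m`-th coordinate `z_m` and the other coordinates `0`. -/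
theorem stmt2 (n : ℕ) (α : Fin n → ℕ) (hα : ∀ i, 0 < α i)
    (w : ℕ) (hw : 0 < w) (hwQ : w ≤ ∑ i, α i)
    (f : ℕ → (Fin n → ℝ) → ℝ)
    (hf_cont : ∀ k ∈ Finset.Icc w (∑ i, α i), Continuous (f k))
    (hf_nonneg : ∀ k ∈ Finset.Icc w (∑ i, α i), ∀ x, 0 ≤ f k x)
    (hf_hom : ∀ k ∈ Finset.Icc w (∑ i, α i), ∀ t : ℝ, 0 < t → ∀ x : Fin n → ℝ,
      f k (fun i => t ^ α i * x i) = t ^ ((∑ i, α i) - k) * f k x)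
    (hfQ : ∃ cQ : ℝ, 0 < cQ ∧ ∀ x, f (∑ i, α i) x = cQ) :
    (∀ Ω₁ Ω₂ : Set (Fin n → ℝ),
      IsOpen Ω₁ → Bornology.IsBounded Ω₁ → (0 : Fin n → ℝ) ∈ Ω₁ →
      IsOpen Ω₂ → Bornology.IsBounded Ω₂ → (0 : Fin n → ℝ) ∈ Ω₂ →
      ∃ C : ℝ, 1 ≤ C ∧ ∀ r : ℝ, 0 < r →
        ENNReal.ofReal C⁻¹ * JNSW n w α f Ω₂ r ≤ JNSW n w α f Ω₁ r ∧
        JNSW n w α f Ω₁ r ≤ ENNReal.ofReal C * JNSW n w α f Ω₂ r) ∧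
    (∀ v : ℕ, 1 ≤ v → v ≤ n → ∀ e : Fin v → Fin n, StrictMono e →
      (∀ k ∈ Finset.Icc w (∑ i, α i), ∀ x y : Fin n → ℝ,
        (∀ m, x (e m) = y (e m)) → f k x = f k y) →
      ∀ Ω : Set (Fin n → ℝ),
        IsOpen Ω → Bornology.IsBounded Ω → (0 : Fin n → ℝ) ∈ Ω →
      ∀ Ω' : Set (Fin v → ℝ),
        IsOpen Ω' → Bornology.IsBounded Ω' → (0 : Fin v → ℝ) ∈ Ω' →
      ∃ C : ℝ, 1 ≤ C ∧ ∀ r : ℝ, 0 < r →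
        ENNReal.ofReal C⁻¹ *
            (∫⁻ z in Ω', ENNReal.ofReal
              (LamNSW n w α f (fun i => ∑ m, if e m = i then z m else 0) r)⁻¹) ≤
          JNSW n w α f Ω r ∧
        JNSW n w α f Ω r ≤ ENNReal.ofReal C *
            (∫⁻ z in Ω', ENNReal.ofReal
              (LamNSW n w α f (fun i => ∑ m, if e m = i then z m else 0) r)⁻¹)) := by
  constructor
  · intro Ω₁ Ω₂ h1o h1b h10 h2o h2b h20
    have hid : Function.Injective (id : Fin n → Fin n) := fun a b h => h
    have hdep : ∀ k ∈ Finset.Icc w (∑ i, α i), ∀ x y : Fin n → ℝ,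
        (∀ m : Fin n, x (id m) = y (id m)) → f k x = f k y :=
      fun k _ x y h => congrArg (f k) (funext h)
    obtain ⟨C, hC, hCr⟩ := nsw_main α hα w hwQ f hf_cont hf_nonneg hf_hom hfQ
      (id : Fin n → Fin n) hid hdep Ω₁ h1o h1b h10 Ω₂ h2o h2b h20
    refine ⟨C, hC, fun r hr => ?_⟩
    have hconv : (∫⁻ z in Ω₂, ENNReal.ofReal
        (LamNSW n w α f (fun i => ∑ m, if (id m : Fin n) = i then z m else 0) r)⁻¹) =
        JNSW n w α f Ω₂ r := by
      have hz : ∀ z : Fin n → ℝ,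
          (fun i => ∑ m, if (id m : Fin n) = i then z m else 0) = z := by
        intro z; funext i
        simp [Finset.sum_ite_eq']
      simp only [JNSW]
      exact lintegral_congr fun z => by rw [hz z]
    rw [← hconv]
    exact hCr r hr
  · intro v _ _ e he hdep Ω hΩo hΩb hΩ0 Ω' h'o h'b h'0
    exact nsw_main α hα w hwQ f hf_cont hf_nonneg hf_hom hfQ e he.injective hdep
      Ω hΩo hΩb hΩ0 Ω' h'o h'b h'0
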